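/- Assume u₀ ∈ L¹(ℝ) ∩ L∞(ℝ) has finite total variation, g is consistent, Lipschitz and monotone, ω^δ is an admissible kernel, the ratio Δt/Δx is fixed, and the CFL condition (Δt/Δx)(sup|∂₁g| + sup|∂₂g|) ≤ 1 (suprema taken over [inf_j u_j^0, sup_j u_j^0]²) holds. Let u^{Δ,δ} be the piecewise constant interpolant of the numerical solution of the nonlocal scheme. Then for every δ > 0 and every t ∈ [0,T], the total variation bound ‖u^{Δ,δ}(·,t)‖_{BV(ℝ)} ≤ ‖u₀‖_{BV(ℝ)} holds. -/

import Mathlib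

open MeasureTheory Real Set Filter Topology

noncomputable section

/-- The nonlocal entropy flux `q(a,b;c) = g(a ⊔ c, b ⊔ c) - g(a ⊓ c, b ⊓ c)`. -/
def entFlux (g : ℝ → ℝ → ℝ) (a b c : ℝ) : ℝ :=
  g (max a c) (max b c) - g (min a c) (min b c)

/-- An admissible nonlocal interaction kernel with horizon `δ`. -/
structure AdmissibleKernel (δ : ℝ) (ω : ℝ → ℝ) : Prop where
  nonneg : ∀ h, 0 ≤ ω h
  integrable : Integrable ω
  supp : ∀ h, h ∉ Set.Icc 0 δ → ω h = 0
  normalized : (∫ h in (0:ℝ)..δ, ω h) = 1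

/-- `r = ⌊δ / Δx⌋`. -/
def gridR (δ Δx : ℝ) : ℕ := ⌊δ / Δx⌋₊

/-- `r ∨ 1 = max r 1`. -/
def gridR1 (δ Δx : ℝ) : ℕ := max (gridR δ Δx) 1

/-- The quadrature weights `W_k`. -/
def qWeight (ω : ℝ → ℝ) (δ Δx : ℝ) (k : ℕ) : ℝ :=
  (1 / ((k : ℝ) * Δx)) * (∫ h in (((k : ℝ) - 1) * Δx)..((k : ℝ) * Δx), ω h)
    + (if k = gridR δ Δx then 1 else 0) / ((gridR1 δ Δx : ℝ) * Δx)
        * (∫ h in ((gridR δ Δx : ℝ) * Δx)..δ, ω h)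

/-- One step of the nonlocal scheme `H`. -/
def schemeStep (g : ℝ → ℝ → ℝ) (Δt : ℝ) (W : ℕ → ℝ) (R : ℕ) (v : ℤ → ℝ) (j : ℤ) : ℝ :=
  v j - Δt * ∑ k ∈ Finset.Icc 1 R,
    W k * (g (v j) (v (j + (k : ℤ))) - g (v (j - (k : ℤ))) (v j))

/-- Iterates of the nonlocal scheme. -/
def schemeSol (g : ℝ → ℝ → ℝ) (Δt : ℝ) (W : ℕ → ℝ) (R : ℕ) (v0 : ℤ → ℝ) : ℕ → ℤ → ℝ
  | 0 => v0
  | n + 1 => schemeStep g Δt W R (schemeSol g Δt W R v0 n)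

/-- Cell averages of the initial data. -/
def cellAvg (u₀ : ℝ → ℝ) (Δx : ℝ) (j : ℤ) : ℝ :=
  (1 / Δx) * ∫ x in (((j : ℝ) - 1/2) * Δx)..(((j : ℝ) + 1/2) * Δx), u₀ x

/-- The numerical solution of the nonlocal scheme with initial data `u₀`. -/
def numSol (g : ℝ → ℝ → ℝ) (ω : ℝ → ℝ) (δ Δx Δt : ℝ) (u₀ : ℝ → ℝ) : ℕ → ℤ → ℝ :=
  schemeSol g Δt (qWeight ω δ Δx) (gridR1 δ Δx) (cellAvg u₀ Δx)

/-- Piecewise constant interpolant of a grid function. -/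
def pcInterp (Δx Δt : ℝ) (v : ℕ → ℤ → ℝ) (x t : ℝ) : ℝ :=
  v ⌊t / Δt⌋₊ ⌊x / Δx + 1/2⌋

/-- The piecewise-constant numerical solution `u^{Δ,δ}`. -/
def numInterp (g : ℝ → ℝ → ℝ) (ω : ℝ → ℝ) (δ Δx Δt : ℝ) (u₀ : ℝ → ℝ) (x t : ℝ) : ℝ :=
  pcInterp Δx Δt (numSol g ω δ Δx Δt u₀) x t

/-- `h^Δ(h) = kΔx` for `h ∈ [(k-1)Δx, kΔx)`. -/
def hDelta (Δx h : ℝ) : ℝ := ((⌊h / Δx⌋ : ℝ) + 1) * Δx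

/-- Interpolant of the test function: affine in `x` on each grid cell, piecewise
constant in `t`. -/
def phiDelta (φ : ℝ → ℝ → ℝ) (Δx Δt : ℝ) (x t : ℝ) : ℝ :=
  φ (((⌊x / Δx + 1/2⌋ : ℝ) - 1/2) * Δx) ((⌊t / Δt⌋₊ : ℝ) * Δt)
    + ((x - ((⌊x / Δx + 1/2⌋ : ℝ) - 1/2) * Δx) / Δx)
      * (φ (((⌊x / Δx + 1/2⌋ : ℝ) + 1/2) * Δx) ((⌊t / Δt⌋₊ : ℝ) * Δt)
          - φ (((⌊x / Δx + 1/2⌋ : ℝ) - 1/2) * Δx) ((⌊t / Δt⌋₊ : ℝ) * Δt))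

/-- The `2r`-point numerical flux `𝕘`. -/
def bigFlux (g : ℝ → ℝ → ℝ) (W : ℕ → ℝ) (Δx : ℝ) (R : ℕ) (v : ℤ → ℝ) (j : ℤ) : ℝ :=
  ∑ k ∈ Finset.Icc 1 R, ∑ l ∈ Finset.Icc 1 k,
    g (v (j - (l : ℤ))) (v (j - (l : ℤ) + (k : ℤ))) * W k * Δx

/-- Supremum of `|∂₁ g|` over `[B₁,B₂] × [B₁,B₂]`. -/
def supAbsDeriv1 (g : ℝ → ℝ → ℝ) (B₁ B₂ : ℝ) : ℝ :=
  sSup ((fun p : ℝ × ℝ => |derivWithin (fun a => g a p.2) (Set.Icc B₁ B₂) p.1|) ''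
    (Set.Icc B₁ B₂ ×ˢ Set.Icc B₁ B₂))

/-- Supremum of `|∂₂ g|` over `[B₁,B₂] × [B₁,B₂]`. -/
def supAbsDeriv2 (g : ℝ → ℝ → ℝ) (B₁ B₂ : ℝ) : ℝ :=
  sSup ((fun p : ℝ × ℝ => |derivWithin (fun b => g p.1 b) (Set.Icc B₁ B₂) p.2|) ''
    (Set.Icc B₁ B₂ ×ˢ Set.Icc B₁ B₂))

/-- Entropy solution of the nonlocal conservation law on `ℝ × [0,T]`. -/
structure IsEntropySolNonlocal (T δ : ℝ) (ω : ℝ → ℝ) (g : ℝ → ℝ → ℝ)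
    (u₀ : ℝ → ℝ) (u : ℝ → ℝ → ℝ) : Prop where
  bounded : ∃ M, ∀ x t, |u x t| ≤ M
  integrable : ∀ t ∈ Set.Icc (0:ℝ) T, Integrable (fun x => u x t)
  contL1 : ∀ t₀ ∈ Set.Icc (0:ℝ) T,
    Tendsto (fun t => ∫ x : ℝ, |u x t - u x t₀|) (nhdsWithin t₀ (Set.Icc 0 T)) (nhds 0)
  init : ∀ x, u x 0 = u₀ x
  entropy : ∀ φ : ℝ → ℝ → ℝ, ContDiff ℝ 1 (fun p : ℝ × ℝ => φ p.1 p.2) →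
    HasCompactSupport (fun p : ℝ × ℝ => φ p.1 p.2) → (∀ x t, 0 ≤ φ x t) → ∀ c : ℝ,
    0 ≤ (∫ t in (0:ℝ)..T, ∫ x : ℝ, |u x t - c| * deriv (fun s => φ x s) t)
      + ∫ t in (0:ℝ)..T, ∫ x : ℝ, ∫ h in (0:ℝ)..δ,
          ((φ (x + h) t - φ x t) / h) * entFlux g (u x t) (u (x + h) t) c * ω h

/-- Kruzhkov entropy solution of the local conservation law `u_t + f(u)_x = 0`. -/
structure IsEntropySolLocal (T : ℝ) (f : ℝ → ℝ) (u₀ : ℝ → ℝ) (u : ℝ → ℝ → ℝ) : Prop where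
  bounded : ∃ M, ∀ x t, |u x t| ≤ M
  integrable : ∀ t ∈ Set.Icc (0:ℝ) T, Integrable (fun x => u x t)
  contL1 : ∀ t₀ ∈ Set.Icc (0:ℝ) T,
    Tendsto (fun t => ∫ x : ℝ, |u x t - u x t₀|) (nhdsWithin t₀ (Set.Icc 0 T)) (nhds 0)
  init : ∀ x, u x 0 = u₀ x
  entropy : ∀ φ : ℝ → ℝ → ℝ, ContDiff ℝ 1 (fun p : ℝ × ℝ => φ p.1 p.2) →
    HasCompactSupport (fun p : ℝ × ℝ => φ p.1 p.2) → (∀ x t, 0 ≤ φ x t) → ∀ c : ℝ,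
    0 ≤ ∫ t in (0:ℝ)..T, ∫ x : ℝ,
        (|u x t - c| * deriv (fun s => φ x s) t
          + Real.sign (u x t - c) * (f (u x t) - f c) * deriv (fun y => φ y t) x)



section AuxBV

private lemma sum_shiftZ (f : ℤ → ℝ) (c : ℤ) (p q : ℕ) :
    ∑ i ∈ Finset.range (p + q), f (c + i) =
      (∑ i ∈ Finset.range p, f (c + i)) + ∑ i ∈ Finset.range q, f (c + p + i) := by
  induction q with
  | zero => simp
  | succ q ih =>
    have h1 : p + (q + 1) = (p + q) + 1 := by omega
    rw [h1, Finset.sum_range_succ, ih, Finset.sum_range_succ, add_assoc]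
    congr 2
    push_cast
    ring

private lemma shifted_sum_le (f : ℤ → ℝ) (hf : ∀ j, 0 ≤ f j) (a : ℤ) (n k : ℕ) :
    ∑ i ∈ Finset.range n, f (a + k + i)
      ≤ (∑ i ∈ Finset.range n, f (a + i)) + ∑ i ∈ Finset.range k, f (a + n + i) := by
  have h1 := sum_shiftZ f a k n
  have h2 := sum_shiftZ f a n k
  have h3 : (0:ℝ) ≤ ∑ i ∈ Finset.range k, f (a + i) :=
    Finset.sum_nonneg fun i _ => hf _
  have h4 : k + n = n + k := by omega
  rw [h4] at h1
  linarith

private lemma shifted_sum_le' (f : ℤ → ℝ) (hf : ∀ j, 0 ≤ f j) (a : ℤ) (n k : ℕ) :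
    ∑ i ∈ Finset.range n, f (a - k + i)
      ≤ (∑ i ∈ Finset.range n, f (a + i)) + ∑ i ∈ Finset.range k, f (a - k + i) := by
  have h1 := sum_shiftZ f (a - k) k n
  have h2 := sum_shiftZ f (a - k) n k
  have h0 : a - (k:ℤ) + (k:ℕ) = a := by push_cast; ring
  rw [h0] at h1
  have h3 : (0:ℝ) ≤ ∑ i ∈ Finset.range k, f (a - k + n + i) :=
    Finset.sum_nonneg fun i _ => hf _
  have h4 : k + n = n + k := by omega
  rw [h4] at h1
  linarith

private lemma tail_sum_le (f : ℤ → ℝ) (hf : ∀ j, 0 ≤ f j) (a : ℤ) {k R : ℕ} (hk : k ≤ R) :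
    ∑ i ∈ Finset.range k, f (a - k + i) ≤ ∑ i ∈ Finset.range R, f (a - R + i) := by
  have h1 := sum_shiftZ f (a - R) (R - k) k
  have h0 : a - (R:ℤ) + ((R - k : ℕ) : ℤ) = a - k := by
    push_cast [Nat.cast_sub hk]; ring
  rw [h0] at h1
  have h2 : (R - k) + k = R := by omega
  rw [h2] at h1
  have h3 : (0:ℝ) ≤ ∑ i ∈ Finset.range (R - k), f (a - R + i) :=
    Finset.sum_nonneg fun i _ => hf _
  linarith

private def dd (v : ℤ → ℝ) (j : ℤ) : ℝ := v (j + 1) - v j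
private def SS1 (g : ℝ → ℝ → ℝ) (v : ℤ → ℝ) (j : ℤ) (k : ℕ) : ℝ :=
  g (v (j + 1)) (v (j + 1 + (k:ℤ))) - g (v j) (v (j + 1 + (k:ℤ)))
private def SS2 (g : ℝ → ℝ → ℝ) (v : ℤ → ℝ) (j : ℤ) (k : ℕ) : ℝ :=
  g (v j) (v (j + 1 + (k:ℤ))) - g (v j) (v (j + (k:ℤ)))
private def SS3 (g : ℝ → ℝ → ℝ) (v : ℤ → ℝ) (j : ℤ) (k : ℕ) : ℝ :=
  g (v (j + 1 - (k:ℤ))) (v (j + 1)) - g (v (j - (k:ℤ))) (v (j + 1))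
private def SS4 (g : ℝ → ℝ → ℝ) (v : ℤ → ℝ) (j : ℤ) (k : ℕ) : ℝ :=
  g (v (j - (k:ℤ))) (v (j + 1)) - g (v (j - (k:ℤ))) (v j)

private lemma SS2_eq (g : ℝ → ℝ → ℝ) (v : ℤ → ℝ) (j : ℤ) (k : ℕ) :
    SS2 g v j k = SS4 g v (j + k) k := by
  simp only [SS2, SS4]
  rw [show j + (k:ℤ) - k = j from by ring, show j + (k:ℤ) + 1 = j + 1 + k from by ring]

private lemma SS3_eq (g : ℝ → ℝ → ℝ) (v : ℤ → ℝ) (j : ℤ) (k : ℕ) :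
    SS3 g v j k = SS1 g v (j - k) k := by
  simp only [SS3, SS1]
  rw [show j - (k:ℤ) + 1 = j + 1 - k from by ring,
    show j + 1 - (k:ℤ) + k = j + 1 from by ring]

section TVD

variable {g : ℝ → ℝ → ℝ} {W : ℕ → ℝ} {R : ℕ} {Δt m M K₁ K₂ : ℝ}

private lemma tvd_step
    (hΔt : 0 ≤ Δt)
    (hmono1 : ∀ a a' b, a ≤ a' → g a b ≤ g a' b)
    (hmono2 : ∀ a b b', b ≤ b' → g a b' ≤ g a b)
    (hK₁ : ∀ a a' b, a ∈ Set.Icc m M → a' ∈ Set.Icc m M → b ∈ Set.Icc m M →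
      |g a b - g a' b| ≤ K₁ * |a - a'|)
    (hK₂ : ∀ a b b', a ∈ Set.Icc m M → b ∈ Set.Icc m M → b' ∈ Set.Icc m M →
      |g a b - g a b'| ≤ K₂ * |b - b'|)
    (hK₁0 : 0 ≤ K₁) (hK₂0 : 0 ≤ K₂)
    (hW : ∀ k ∈ Finset.Icc 1 R, 0 ≤ W k)
    (hCFL : Δt * (∑ k ∈ Finset.Icc 1 R, W k) * (K₁ + K₂) ≤ 1)
    (v : ℤ → ℝ) (hv : ∀ j, v j ∈ Set.Icc m M) (a : ℤ) (n : ℕ) :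
    ∑ i ∈ Finset.range n,
        |schemeStep g Δt W R v (a + i + 1) - schemeStep g Δt W R v (a + i)|
      ≤ ∑ i ∈ Finset.range (n + 2 * R), |v (a - R + i + 1) - v (a - R + i)| := by
  have habsS1 : ∀ j k, |SS1 g v j k| ≤ K₁ * |dd v j| := by
    intro j k
    have := hK₁ (v (j+1)) (v j) (v (j + 1 + (k:ℤ))) (hv _) (hv _) (hv _)
    simpa [SS1, dd] using this
  have habsS4 : ∀ j k, |SS4 g v j k| ≤ K₂ * |dd v j| := by
    intro j k
    have := hK₂ (v (j - (k:ℤ))) (v (j+1)) (v j) (hv _) (hv _) (hv _)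
    simpa [SS4, dd, abs_sub_comm (v (j+1)) (v j)] using this
  -- pointwise expansion
  have expand : ∀ j : ℤ, schemeStep g Δt W R v (j + 1) - schemeStep g Δt W R v j
      = dd v j - Δt * ∑ k ∈ Finset.Icc 1 R,
          W k * ((SS1 g v j k - SS4 g v j k) + (SS2 g v j k - SS3 g v j k)) := by
    intro j
    simp only [schemeStep, dd]
    rw [sub_sub_sub_comm, ← mul_sub, ← Finset.sum_sub_distrib]
    congr 1
    congr 1
    apply Finset.sum_congr rfl
    intro k _
    simp only [SS1, SS2, SS3, SS4]
    ring
  -- key pointwise estimate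
  have key : ∀ j : ℤ, |schemeStep g Δt W R v (j + 1) - schemeStep g Δt W R v j|
      ≤ |dd v j| - Δt * ∑ k ∈ Finset.Icc 1 R, W k * (|SS1 g v j k| + |SS4 g v j k|)
        + Δt * ∑ k ∈ Finset.Icc 1 R, W k * (|SS2 g v j k| + |SS3 g v j k|) := by
    intro j
    rw [expand j]
    have hsplit : dd v j - Δt * ∑ k ∈ Finset.Icc 1 R,
          W k * ((SS1 g v j k - SS4 g v j k) + (SS2 g v j k - SS3 g v j k))
        = (dd v j - Δt * ∑ k ∈ Finset.Icc 1 R, W k * (SS1 g v j k - SS4 g v j k))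
          - Δt * ∑ k ∈ Finset.Icc 1 R, W k * (SS2 g v j k - SS3 g v j k) := by
      rw [Finset.sum_congr rfl (fun k _ => by
        ring : ∀ k ∈ Finset.Icc 1 R,
          W k * ((SS1 g v j k - SS4 g v j k) + (SS2 g v j k - SS3 g v j k))
          = W k * (SS1 g v j k - SS4 g v j k) + W k * (SS2 g v j k - SS3 g v j k))]
      rw [Finset.sum_add_distrib]
      ring
    rw [hsplit]
    have h23 : |Δt * ∑ k ∈ Finset.Icc 1 R, W k * (SS2 g v j k - SS3 g v j k)|
        ≤ Δt * ∑ k ∈ Finset.Icc 1 R, W k * (|SS2 g v j k| + |SS3 g v j k|) := by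
      rw [abs_mul, abs_of_nonneg hΔt]
      apply mul_le_mul_of_nonneg_left _ hΔt
      calc |∑ k ∈ Finset.Icc 1 R, W k * (SS2 g v j k - SS3 g v j k)|
          ≤ ∑ k ∈ Finset.Icc 1 R, |W k * (SS2 g v j k - SS3 g v j k)| :=
            Finset.abs_sum_le_sum_abs _ _
        _ ≤ ∑ k ∈ Finset.Icc 1 R, W k * (|SS2 g v j k| + |SS3 g v j k|) := by
            apply Finset.sum_le_sum
            intro k hk
            rw [abs_mul, abs_of_nonneg (hW k hk)]
            exact mul_le_mul_of_nonneg_left (abs_sub _ _) (hW k hk)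
    have h14 : |dd v j - Δt * ∑ k ∈ Finset.Icc 1 R, W k * (SS1 g v j k - SS4 g v j k)|
        ≤ |dd v j| - Δt * ∑ k ∈ Finset.Icc 1 R, W k * (|SS1 g v j k| + |SS4 g v j k|) := by
      rcases le_or_gt 0 (dd v j) with hdj | hdj
      · have hvle : v j ≤ v (j + 1) := by
          have : 0 ≤ v (j+1) - v j := hdj
          linarith
        have heq : (∑ k ∈ Finset.Icc 1 R, W k * (SS1 g v j k - SS4 g v j k))
            = ∑ k ∈ Finset.Icc 1 R, W k * (|SS1 g v j k| + |SS4 g v j k|) := by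
          apply Finset.sum_congr rfl
          intro k _
          have h1 : 0 ≤ SS1 g v j k := sub_nonneg.2 (hmono1 _ _ _ hvle)
          have h4 : SS4 g v j k ≤ 0 := sub_nonpos.2 (hmono2 _ _ _ hvle)
          rw [abs_of_nonneg h1, abs_of_nonpos h4]
          ring
        have hE0 : 0 ≤ Δt * ∑ k ∈ Finset.Icc 1 R, W k * (SS1 g v j k - SS4 g v j k) := by
          rw [heq]
          apply mul_nonneg hΔt
          exact Finset.sum_nonneg fun k hk => mul_nonneg (hW k hk) (by positivity)
        have hEd : Δt * ∑ k ∈ Finset.Icc 1 R, W k * (SS1 g v j k - SS4 g v j k) ≤ dd v j := by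
          have hb : ∑ k ∈ Finset.Icc 1 R, W k * (SS1 g v j k - SS4 g v j k)
              ≤ ∑ k ∈ Finset.Icc 1 R, W k * ((K₁ + K₂) * dd v j) := by
            apply Finset.sum_le_sum
            intro k hk
            apply mul_le_mul_of_nonneg_left _ (hW k hk)
            have b1 : SS1 g v j k ≤ K₁ * dd v j := by
              have := (le_abs_self (SS1 g v j k)).trans (habsS1 j k)
              rwa [abs_of_nonneg hdj] at this
            have b4 : -SS4 g v j k ≤ K₂ * dd v j := by
              have := (neg_le_abs (SS4 g v j k)).trans (habsS4 j k)
              rwa [abs_of_nonneg hdj] at this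
            linarith
          calc Δt * ∑ k ∈ Finset.Icc 1 R, W k * (SS1 g v j k - SS4 g v j k)
              ≤ Δt * ∑ k ∈ Finset.Icc 1 R, W k * ((K₁ + K₂) * dd v j) :=
                mul_le_mul_of_nonneg_left hb hΔt
            _ = (Δt * (∑ k ∈ Finset.Icc 1 R, W k) * (K₁ + K₂)) * dd v j := by
                rw [← Finset.sum_mul]
                ring
            _ ≤ 1 * dd v j := mul_le_mul_of_nonneg_right hCFL hdj
            _ = dd v j := one_mul _
        rw [abs_of_nonneg (by linarith), abs_of_nonneg hdj, heq]
      · have hvle : v (j + 1) ≤ v j := by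
          have : v (j+1) - v j < 0 := hdj
          linarith
        have heq : (∑ k ∈ Finset.Icc 1 R, W k * (SS1 g v j k - SS4 g v j k))
            = -∑ k ∈ Finset.Icc 1 R, W k * (|SS1 g v j k| + |SS4 g v j k|) := by
          rw [← Finset.sum_neg_distrib]
          apply Finset.sum_congr rfl
          intro k _
          have h1 : SS1 g v j k ≤ 0 := sub_nonpos.2 (hmono1 _ _ _ hvle)
          have h4 : 0 ≤ SS4 g v j k := sub_nonneg.2 (hmono2 _ _ _ hvle)
          rw [abs_of_nonpos h1, abs_of_nonneg h4]
          ring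
        have hEd : dd v j ≤ Δt * ∑ k ∈ Finset.Icc 1 R, W k * (SS1 g v j k - SS4 g v j k) := by
          have hb : ∑ k ∈ Finset.Icc 1 R, W k * ((K₁ + K₂) * dd v j)
              ≤ ∑ k ∈ Finset.Icc 1 R, W k * (SS1 g v j k - SS4 g v j k) := by
            apply Finset.sum_le_sum
            intro k hk
            apply mul_le_mul_of_nonneg_left _ (hW k hk)
            have hadj : |dd v j| = -dd v j := abs_of_neg hdj
            have b1 : K₁ * dd v j ≤ SS1 g v j k := by
              have h2 := habsS1 j k
              have h3 := neg_abs_le (SS1 g v j k)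
              rw [hadj] at h2
              linarith
            have b4 : K₂ * dd v j ≤ -SS4 g v j k := by
              have h2 := habsS4 j k
              have h3 := le_abs_self (SS4 g v j k)
              rw [hadj] at h2
              linarith
            linarith
          calc dd v j = 1 * dd v j := (one_mul _).symm
            _ ≤ (Δt * (∑ k ∈ Finset.Icc 1 R, W k) * (K₁ + K₂)) * dd v j :=
                mul_le_mul_of_nonpos_right hCFL hdj.le
            _ = Δt * ∑ k ∈ Finset.Icc 1 R, W k * ((K₁ + K₂) * dd v j) := by
                rw [← Finset.sum_mul]
                ring
            _ ≤ Δt * ∑ k ∈ Finset.Icc 1 R, W k * (SS1 g v j k - SS4 g v j k) :=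
                mul_le_mul_of_nonneg_left hb hΔt
        rw [abs_of_nonpos (by linarith), abs_of_neg hdj, heq]
        linarith [le_refl (Δt * ∑ k ∈ Finset.Icc 1 R, W k * (|SS1 g v j k| + |SS4 g v j k|))]
    calc |(dd v j - Δt * ∑ k ∈ Finset.Icc 1 R, W k * (SS1 g v j k - SS4 g v j k))
          - Δt * ∑ k ∈ Finset.Icc 1 R, W k * (SS2 g v j k - SS3 g v j k)|
        ≤ |dd v j - Δt * ∑ k ∈ Finset.Icc 1 R, W k * (SS1 g v j k - SS4 g v j k)|
          + |Δt * ∑ k ∈ Finset.Icc 1 R, W k * (SS2 g v j k - SS3 g v j k)| := abs_sub _ _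
      _ ≤ _ := by linarith
  -- summation stage
  have hA0 : (0:ℝ) ≤ ∑ i ∈ Finset.range R, |dd v (a - (R:ℤ) + i)| :=
    Finset.sum_nonneg fun i _ => abs_nonneg _
  have hB0 : (0:ℝ) ≤ ∑ i ∈ Finset.range R, |dd v (a + (n:ℤ) + i)| :=
    Finset.sum_nonneg fun i _ => abs_nonneg _
  have perk : ∀ k ∈ Finset.Icc 1 R,
      (∑ i ∈ Finset.range n, (|SS2 g v (a + i) k| + |SS3 g v (a + i) k|))
        - ∑ i ∈ Finset.range n, (|SS1 g v (a + i) k| + |SS4 g v (a + i) k|)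
      ≤ (K₁ + K₂) * ((∑ i ∈ Finset.range R, |dd v (a - (R:ℤ) + i)|)
          + ∑ i ∈ Finset.range R, |dd v (a + (n:ℤ) + i)|) := by
    intro k hk
    obtain ⟨hk1, hkR⟩ := Finset.mem_Icc.mp hk
    have h2 : ∑ i ∈ Finset.range n, |SS2 g v (a + i) k|
        ≤ (∑ i ∈ Finset.range n, |SS4 g v (a + i) k|)
          + K₂ * ∑ i ∈ Finset.range R, |dd v (a + (n:ℤ) + i)| := by
      calc ∑ i ∈ Finset.range n, |SS2 g v (a + i) k|
          = ∑ i ∈ Finset.range n, |SS4 g v (a + (k:ℤ) + i) k| := by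
            apply Finset.sum_congr rfl
            intro i _
            rw [SS2_eq, show a + (i:ℤ) + k = a + (k:ℤ) + i from by ring]
        _ ≤ (∑ i ∈ Finset.range n, |SS4 g v (a + i) k|)
            + ∑ i ∈ Finset.range k, |SS4 g v (a + (n:ℤ) + i) k| :=
            shifted_sum_le (fun j => |SS4 g v j k|) (fun j => abs_nonneg _) a n k
        _ ≤ (∑ i ∈ Finset.range n, |SS4 g v (a + i) k|)
            + K₂ * ∑ i ∈ Finset.range R, |dd v (a + (n:ℤ) + i)| := by
            have hc : ∑ i ∈ Finset.range k, |SS4 g v (a + (n:ℤ) + i) k|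
                ≤ ∑ i ∈ Finset.range R, K₂ * |dd v (a + (n:ℤ) + i)| := by
              calc ∑ i ∈ Finset.range k, |SS4 g v (a + (n:ℤ) + i) k|
                  ≤ ∑ i ∈ Finset.range k, K₂ * |dd v (a + (n:ℤ) + i)| :=
                    Finset.sum_le_sum fun i _ => habsS4 (a + (n:ℤ) + i) k
                _ ≤ ∑ i ∈ Finset.range R, K₂ * |dd v (a + (n:ℤ) + i)| :=
                    Finset.sum_le_sum_of_subset_of_nonneg (Finset.range_subset_range.2 hkR)
                      (fun i _ _ => mul_nonneg hK₂0 (abs_nonneg _))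
            rw [← Finset.mul_sum] at hc
            linarith
    have h3 : ∑ i ∈ Finset.range n, |SS3 g v (a + i) k|
        ≤ (∑ i ∈ Finset.range n, |SS1 g v (a + i) k|)
          + K₁ * ∑ i ∈ Finset.range R, |dd v (a - (R:ℤ) + i)| := by
      calc ∑ i ∈ Finset.range n, |SS3 g v (a + i) k|
          = ∑ i ∈ Finset.range n, |SS1 g v (a - (k:ℤ) + i) k| := by
            apply Finset.sum_congr rfl
            intro i _
            rw [SS3_eq, show a + (i:ℤ) - k = a - (k:ℤ) + i from by ring]
        _ ≤ (∑ i ∈ Finset.range n, |SS1 g v (a + i) k|)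
            + ∑ i ∈ Finset.range k, |SS1 g v (a - (k:ℤ) + i) k| :=
            shifted_sum_le' (fun j => |SS1 g v j k|) (fun j => abs_nonneg _) a n k
        _ ≤ (∑ i ∈ Finset.range n, |SS1 g v (a + i) k|)
            + K₁ * ∑ i ∈ Finset.range R, |dd v (a - (R:ℤ) + i)| := by
            have hstep : ∑ i ∈ Finset.range k, |SS1 g v (a - (k:ℤ) + i) k|
                ≤ ∑ i ∈ Finset.range k, K₁ * |dd v (a - (k:ℤ) + i)| :=
              Finset.sum_le_sum fun i _ => habsS1 (a - (k:ℤ) + i) k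
            have htail : ∑ i ∈ Finset.range k, K₁ * |dd v (a - (k:ℤ) + i)|
                ≤ ∑ i ∈ Finset.range R, K₁ * |dd v (a - (R:ℤ) + i)| :=
              tail_sum_le (fun j => K₁ * |dd v j|)
                (fun j => mul_nonneg hK₁0 (abs_nonneg _)) a hkR
            rw [← Finset.mul_sum, ← Finset.mul_sum] at htail
            rw [← Finset.mul_sum] at hstep
            linarith
    rw [Finset.sum_add_distrib, Finset.sum_add_distrib]
    nlinarith [mul_nonneg hK₁0 hB0, mul_nonneg hK₂0 hA0]
  -- put everything together
  have sw1 : ∑ i ∈ Finset.range n,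
        Δt * ∑ k ∈ Finset.Icc 1 R, W k * (|SS1 g v (a + i) k| + |SS4 g v (a + i) k|)
      = Δt * ∑ k ∈ Finset.Icc 1 R,
          W k * ∑ i ∈ Finset.range n, (|SS1 g v (a + i) k| + |SS4 g v (a + i) k|) := by
    rw [← Finset.mul_sum, Finset.sum_comm]
    congr 1
    exact Finset.sum_congr rfl fun k _ => (Finset.mul_sum _ _ _).symm
  have sw2 : ∑ i ∈ Finset.range n,
        Δt * ∑ k ∈ Finset.Icc 1 R, W k * (|SS2 g v (a + i) k| + |SS3 g v (a + i) k|)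
      = Δt * ∑ k ∈ Finset.Icc 1 R,
          W k * ∑ i ∈ Finset.range n, (|SS2 g v (a + i) k| + |SS3 g v (a + i) k|) := by
    rw [← Finset.mul_sum, Finset.sum_comm]
    congr 1
    exact Finset.sum_congr rfl fun k _ => (Finset.mul_sum _ _ _).symm
  have E1 : ∑ i ∈ Finset.range n,
        (|dd v (a + i)|
          - Δt * ∑ k ∈ Finset.Icc 1 R, W k * (|SS1 g v (a + i) k| + |SS4 g v (a + i) k|)
          + Δt * ∑ k ∈ Finset.Icc 1 R, W k * (|SS2 g v (a + i) k| + |SS3 g v (a + i) k|))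
      = (∑ i ∈ Finset.range n, |dd v (a + i)|)
        - (∑ i ∈ Finset.range n,
            Δt * ∑ k ∈ Finset.Icc 1 R, W k * (|SS1 g v (a + i) k| + |SS4 g v (a + i) k|))
        + ∑ i ∈ Finset.range n,
            Δt * ∑ k ∈ Finset.Icc 1 R, W k * (|SS2 g v (a + i) k| + |SS3 g v (a + i) k|) := by
    rw [Finset.sum_add_distrib, Finset.sum_sub_distrib]
  have E4 : ∑ k ∈ Finset.Icc 1 R,
        W k * ((∑ i ∈ Finset.range n, (|SS2 g v (a + i) k| + |SS3 g v (a + i) k|))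
          - ∑ i ∈ Finset.range n, (|SS1 g v (a + i) k| + |SS4 g v (a + i) k|))
      = (∑ k ∈ Finset.Icc 1 R,
          W k * ∑ i ∈ Finset.range n, (|SS2 g v (a + i) k| + |SS3 g v (a + i) k|))
        - ∑ k ∈ Finset.Icc 1 R,
            W k * ∑ i ∈ Finset.range n, (|SS1 g v (a + i) k| + |SS4 g v (a + i) k|) := by
    rw [← Finset.sum_sub_distrib]
    exact Finset.sum_congr rfl fun k _ => by ring
  have E4' : Δt * ∑ k ∈ Finset.Icc 1 R,
        W k * ((∑ i ∈ Finset.range n, (|SS2 g v (a + i) k| + |SS3 g v (a + i) k|))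
          - ∑ i ∈ Finset.range n, (|SS1 g v (a + i) k| + |SS4 g v (a + i) k|))
      = (Δt * ∑ k ∈ Finset.Icc 1 R,
          W k * ∑ i ∈ Finset.range n, (|SS2 g v (a + i) k| + |SS3 g v (a + i) k|))
        - Δt * ∑ k ∈ Finset.Icc 1 R,
            W k * ∑ i ∈ Finset.range n, (|SS1 g v (a + i) k| + |SS4 g v (a + i) k|) := by
    rw [E4]; ring
  have step1 : ∑ i ∈ Finset.range n,
        |schemeStep g Δt W R v (a + i + 1) - schemeStep g Δt W R v (a + i)|
      ≤ ∑ i ∈ Finset.range n,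
          (|dd v (a + i)|
            - Δt * ∑ k ∈ Finset.Icc 1 R, W k * (|SS1 g v (a + i) k| + |SS4 g v (a + i) k|)
            + Δt * ∑ k ∈ Finset.Icc 1 R, W k * (|SS2 g v (a + i) k| + |SS3 g v (a + i) k|)) :=
    Finset.sum_le_sum fun i _ => key (a + i)
  have step3 : Δt * ∑ k ∈ Finset.Icc 1 R,
        W k * ((∑ i ∈ Finset.range n, (|SS2 g v (a + i) k| + |SS3 g v (a + i) k|))
          - ∑ i ∈ Finset.range n, (|SS1 g v (a + i) k| + |SS4 g v (a + i) k|))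
      ≤ (∑ i ∈ Finset.range R, |dd v (a - (R:ℤ) + i)|)
        + ∑ i ∈ Finset.range R, |dd v (a + (n:ℤ) + i)| := by
    have hb : ∑ k ∈ Finset.Icc 1 R,
          W k * ((∑ i ∈ Finset.range n, (|SS2 g v (a + i) k| + |SS3 g v (a + i) k|))
            - ∑ i ∈ Finset.range n, (|SS1 g v (a + i) k| + |SS4 g v (a + i) k|))
        ≤ ∑ k ∈ Finset.Icc 1 R, W k * ((K₁ + K₂) *
            ((∑ i ∈ Finset.range R, |dd v (a - (R:ℤ) + i)|)
              + ∑ i ∈ Finset.range R, |dd v (a + (n:ℤ) + i)|)) :=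
      Finset.sum_le_sum fun k hk => mul_le_mul_of_nonneg_left (perk k hk) (hW k hk)
    calc Δt * ∑ k ∈ Finset.Icc 1 R,
          W k * ((∑ i ∈ Finset.range n, (|SS2 g v (a + i) k| + |SS3 g v (a + i) k|))
            - ∑ i ∈ Finset.range n, (|SS1 g v (a + i) k| + |SS4 g v (a + i) k|))
        ≤ Δt * ∑ k ∈ Finset.Icc 1 R, W k * ((K₁ + K₂) *
            ((∑ i ∈ Finset.range R, |dd v (a - (R:ℤ) + i)|)
              + ∑ i ∈ Finset.range R, |dd v (a + (n:ℤ) + i)|)) :=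
          mul_le_mul_of_nonneg_left hb hΔt
      _ = (Δt * (∑ k ∈ Finset.Icc 1 R, W k) * (K₁ + K₂)) *
            ((∑ i ∈ Finset.range R, |dd v (a - (R:ℤ) + i)|)
              + ∑ i ∈ Finset.range R, |dd v (a + (n:ℤ) + i)|) := by
          rw [← Finset.sum_mul]
          ring
      _ ≤ 1 * ((∑ i ∈ Finset.range R, |dd v (a - (R:ℤ) + i)|)
              + ∑ i ∈ Finset.range R, |dd v (a + (n:ℤ) + i)|) :=
          mul_le_mul_of_nonneg_right hCFL (by linarith)
      _ = _ := one_mul _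
  have rhs_eq : ∑ i ∈ Finset.range (n + 2 * R), |v (a - R + i + 1) - v (a - R + i)|
      = (∑ i ∈ Finset.range n, |dd v (a + i)|)
        + ((∑ i ∈ Finset.range R, |dd v (a - (R:ℤ) + i)|)
          + ∑ i ∈ Finset.range R, |dd v (a + (n:ℤ) + i)|) := by
    calc ∑ i ∈ Finset.range (n + 2 * R), |v (a - R + i + 1) - v (a - R + i)|
        = ∑ i ∈ Finset.range (R + (n + R)), |dd v (a - (R:ℤ) + i)| := by
          rw [show n + 2 * R = R + (n + R) from by omega]
          exact Finset.sum_congr rfl fun i _ => rfl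
        _ = (∑ i ∈ Finset.range R, |dd v (a - (R:ℤ) + i)|)
            + ∑ i ∈ Finset.range (n + R), |dd v (a - (R:ℤ) + R + i)| :=
          sum_shiftZ (fun j => |dd v j|) (a - R) R (n + R)
        _ = (∑ i ∈ Finset.range R, |dd v (a - (R:ℤ) + i)|)
            + ∑ i ∈ Finset.range (n + R), |dd v (a + i)| := by
          simp only [show a - (R:ℤ) + (R:ℕ) = a from by push_cast; ring]
        _ = (∑ i ∈ Finset.range R, |dd v (a - (R:ℤ) + i)|)
            + ((∑ i ∈ Finset.range n, |dd v (a + i)|)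
              + ∑ i ∈ Finset.range R, |dd v (a + (n:ℤ) + i)|) := by
          rw [sum_shiftZ (fun j => |dd v j|) a n R]
        _ = _ := by ring
  rw [rhs_eq]
  linarith [step1, E1, sw1, sw2, E4', step3]

end TVD


section MaxPrin

variable {g : ℝ → ℝ → ℝ} {W : ℕ → ℝ} {R : ℕ} {Δt m M K₁ K₂ : ℝ}

private lemma max_principle
    (hΔt : 0 ≤ Δt) (hmM : m ≤ M)
    (hmono1 : ∀ a a' b, a ≤ a' → g a b ≤ g a' b)
    (hmono2 : ∀ a b b', b ≤ b' → g a b' ≤ g a b)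
    (hK₁ : ∀ a a' b, a ∈ Set.Icc m M → a' ∈ Set.Icc m M → b ∈ Set.Icc m M →
      |g a b - g a' b| ≤ K₁ * |a - a'|)
    (hK₂ : ∀ a b b', a ∈ Set.Icc m M → b ∈ Set.Icc m M → b' ∈ Set.Icc m M →
      |g a b - g a b'| ≤ K₂ * |b - b'|)
    (hW : ∀ k ∈ Finset.Icc 1 R, 0 ≤ W k)
    (hCFL : Δt * (∑ k ∈ Finset.Icc 1 R, W k) * (K₁ + K₂) ≤ 1)
    (v : ℤ → ℝ) (hv : ∀ j, v j ∈ Set.Icc m M) (j : ℤ) :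
    schemeStep g Δt W R v j ∈ Set.Icc m M := by
  have hjmem := hv j
  have hjm := hjmem.1
  have hjM := hjmem.2
  have hMmem : M ∈ Set.Icc m M := ⟨hmM, le_rfl⟩
  have hmmem : m ∈ Set.Icc m M := ⟨le_rfl, hmM⟩
  have hub : ∀ k ∈ Finset.Icc 1 R,
      -((K₁ + K₂) * (M - v j)) ≤ g (v j) (v (j + (k:ℤ))) - g (v (j - (k:ℤ))) (v j) := by
    intro k _
    have t1 : g M (v (j + (k:ℤ))) - g (v j) (v (j + (k:ℤ))) ≤ K₁ * (M - v j) := by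
      have h := hK₁ M (v j) (v (j + (k:ℤ))) hMmem (hv _) (hv _)
      rw [abs_of_nonneg (show (0:ℝ) ≤ M - v j by linarith)] at h
      exact (le_abs_self _).trans h
    have t2 : g M M ≤ g M (v (j + (k:ℤ))) := hmono2 M (v (j + (k:ℤ))) M (hv _).2
    have t3 : g (v (j - (k:ℤ))) M ≤ g M M := hmono1 _ M M (hv _).2
    have t4 : g (v (j - (k:ℤ))) (v j) - g (v (j - (k:ℤ))) M ≤ K₂ * (M - v j) := by
      have h := hK₂ (v (j - (k:ℤ))) (v j) M (hv _) (hv _) hMmem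
      rw [abs_of_nonpos (show v j - M ≤ (0:ℝ) by linarith)] at h
      have := (le_abs_self (g (v (j - (k:ℤ))) (v j) - g (v (j - (k:ℤ))) M)).trans h
      linarith
    linarith
  have hlb : ∀ k ∈ Finset.Icc 1 R,
      g (v j) (v (j + (k:ℤ))) - g (v (j - (k:ℤ))) (v j) ≤ (K₁ + K₂) * (v j - m) := by
    intro k _
    have s1 : g (v j) (v (j + (k:ℤ))) - g m (v (j + (k:ℤ))) ≤ K₁ * (v j - m) := by
      have h := hK₁ (v j) m (v (j + (k:ℤ))) (hv _) hmmem (hv _)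
      rw [abs_of_nonneg (show (0:ℝ) ≤ v j - m by linarith)] at h
      exact (le_abs_self _).trans h
    have s2 : g m (v (j + (k:ℤ))) ≤ g m m := hmono2 m m (v (j + (k:ℤ))) (hv _).1
    have s3 : g m m ≤ g (v (j - (k:ℤ))) m := hmono1 m _ m (hv _).1
    have s4 : g (v (j - (k:ℤ))) m - g (v (j - (k:ℤ))) (v j) ≤ K₂ * (v j - m) := by
      have h := hK₂ (v (j - (k:ℤ))) m (v j) (hv _) hmmem (hv _)
      rw [abs_of_nonpos (show m - v j ≤ (0:ℝ) by linarith)] at h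
      have := (le_abs_self (g (v (j - (k:ℤ))) m - g (v (j - (k:ℤ))) (v j))).trans h
      linarith
    linarith
  simp only [schemeStep]
  constructor
  · -- lower bound
    have hB : ∑ k ∈ Finset.Icc 1 R,
          W k * (g (v j) (v (j + (k:ℤ))) - g (v (j - (k:ℤ))) (v j))
        ≤ (∑ k ∈ Finset.Icc 1 R, W k) * ((K₁ + K₂) * (v j - m)) := by
      rw [Finset.sum_mul]
      exact Finset.sum_le_sum fun k hk =>
        mul_le_mul_of_nonneg_left (hlb k hk) (hW k hk)
    have h5 : Δt * ∑ k ∈ Finset.Icc 1 R,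
          W k * (g (v j) (v (j + (k:ℤ))) - g (v (j - (k:ℤ))) (v j))
        ≤ Δt * ((∑ k ∈ Finset.Icc 1 R, W k) * ((K₁ + K₂) * (v j - m))) :=
      mul_le_mul_of_nonneg_left hB hΔt
    have h6 : Δt * ((∑ k ∈ Finset.Icc 1 R, W k) * ((K₁ + K₂) * (v j - m)))
        = (Δt * (∑ k ∈ Finset.Icc 1 R, W k) * (K₁ + K₂)) * (v j - m) := by ring
    have h7 : (Δt * (∑ k ∈ Finset.Icc 1 R, W k) * (K₁ + K₂)) * (v j - m)
        ≤ 1 * (v j - m) := mul_le_mul_of_nonneg_right hCFL (by linarith)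
    linarith
  · -- upper bound
    have hB : (∑ k ∈ Finset.Icc 1 R, W k) * (-((K₁ + K₂) * (M - v j)))
        ≤ ∑ k ∈ Finset.Icc 1 R,
            W k * (g (v j) (v (j + (k:ℤ))) - g (v (j - (k:ℤ))) (v j)) := by
      rw [Finset.sum_mul]
      exact Finset.sum_le_sum fun k hk =>
        mul_le_mul_of_nonneg_left (hub k hk) (hW k hk)
    have h5 : Δt * ((∑ k ∈ Finset.Icc 1 R, W k) * (-((K₁ + K₂) * (M - v j))))
        ≤ Δt * ∑ k ∈ Finset.Icc 1 R,
            W k * (g (v j) (v (j + (k:ℤ))) - g (v (j - (k:ℤ))) (v j)) :=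
      mul_le_mul_of_nonneg_left hB hΔt
    have h6 : Δt * ((∑ k ∈ Finset.Icc 1 R, W k) * (-((K₁ + K₂) * (M - v j))))
        = -((Δt * (∑ k ∈ Finset.Icc 1 R, W k) * (K₁ + K₂)) * (M - v j)) := by ring
    have h7 : (Δt * (∑ k ∈ Finset.Icc 1 R, W k) * (K₁ + K₂)) * (M - v j)
        ≤ 1 * (M - v j) := mul_le_mul_of_nonneg_right hCFL (by linarith)
    linarith

end MaxPrin



section Weights

variable {δ Δx : ℝ} {ω : ℝ → ℝ}

private lemma gridR_mul_le (hδ : 0 < δ) (hΔx : 0 < Δx) : (gridR δ Δx : ℝ) * Δx ≤ δ := by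
  have h := Nat.floor_le (show (0:ℝ) ≤ δ / Δx by positivity)
  rw [le_div_iff₀ hΔx] at h
  exact h

private lemma qWeight_nonneg (hδ : 0 < δ) (hΔx : 0 < Δx) (hω : AdmissibleKernel δ ω)
    (k : ℕ) : 0 ≤ qWeight ω δ Δx k := by
  have h1 : ((k:ℝ) - 1) * Δx ≤ (k:ℝ) * Δx := by nlinarith
  apply add_nonneg
  · exact mul_nonneg (by positivity)
      (intervalIntegral.integral_nonneg h1 fun u _ => hω.nonneg u)
  · apply mul_nonneg
    · apply div_nonneg _ (by positivity)
      split <;> norm_num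
    · exact intervalIntegral.integral_nonneg (gridR_mul_le hδ hΔx) fun u _ => hω.nonneg u

private lemma qWeight_sum_le (hδ : 0 < δ) (hΔx : 0 < Δx) (hω : AdmissibleKernel δ ω) :
    ∑ k ∈ Finset.Icc 1 (gridR1 δ Δx), qWeight ω δ Δx k ≤ 1 / Δx := by
  have hInt : ∀ a b : ℝ, IntervalIntegrable ω volume a b :=
    fun a b => hω.integrable.intervalIntegrable
  -- adjacent-interval sum
  have hadj : ∀ n : ℕ, ∑ i ∈ Finset.range n,
      ∫ h in ((i:ℝ) * Δx)..(((i:ℝ) + 1) * Δx), ω h = ∫ h in (0:ℝ)..((n:ℝ) * Δx), ω h := by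
    intro n
    have := intervalIntegral.sum_integral_adjacent_intervals
      (a := fun i : ℕ => (i : ℝ) * Δx) (n := n) (μ := volume) (f := ω)
      (fun k _ => hInt _ _)
    simp only [Nat.cast_zero, zero_mul] at this
    calc ∑ i ∈ Finset.range n, ∫ h in ((i:ℝ) * Δx)..(((i:ℝ) + 1) * Δx), ω h
        = ∑ i ∈ Finset.range n, ∫ h in ((i:ℝ) * Δx)..(((i+1 : ℕ):ℝ) * Δx), ω h := by
          apply Finset.sum_congr rfl
          intro i _
          congr 1
          push_cast
          ring
      _ = _ := this
  -- rewrite the sum over Icc 1 R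
  have hreindex : ∀ (f : ℕ → ℝ) (R : ℕ), ∑ k ∈ Finset.Icc 1 R, f k
      = ∑ i ∈ Finset.range R, f (1 + i) := by
    intro f R
    rw [← Finset.Ico_add_one_right_eq_Icc, Finset.sum_Ico_eq_sum_range]
    simp
  rcases Nat.eq_zero_or_pos (gridR δ Δx) with hr | hr
  · -- δ < Δx : R = 1
    have hR : gridR1 δ Δx = 1 := by simp [gridR1, hr]
    have hδΔx : δ < Δx := by
      have := (Nat.floor_eq_zero).1 hr
      rwa [div_lt_one hΔx] at this
    have hzero : ∫ h in δ..Δx, ω h = 0 := by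
      rw [intervalIntegral.integral_of_le hδΔx.le]
      rw [setIntegral_congr_fun measurableSet_Ioc
        (fun x hx => hω.supp x (fun hmem => absurd hmem.2 (not_le.2 hx.1)))]
      simp
    have hone : (∫ h in ((((1:ℕ):ℝ) - 1) * Δx)..(((1:ℕ):ℝ) * Δx), ω h) = 1 := by
      rw [show (((1:ℕ):ℝ) - 1) * Δx = (0:ℝ) from by norm_num,
        show ((1:ℕ):ℝ) * Δx = Δx from by norm_num,
        ← intervalIntegral.integral_add_adjacent_intervals (hInt 0 δ) (hInt δ Δx),
        hω.normalized, hzero]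
      norm_num
    rw [hR, Finset.Icc_self, Finset.sum_singleton]
    simp only [qWeight, hR]
    rw [hone, if_neg (show (1:ℕ) ≠ gridR δ Δx from by omega)]
    simp
  · -- r ≥ 1 : R = r
    set r := gridR δ Δx with hrdef
    have hR : gridR1 δ Δx = r := max_eq_left hr
    have htail0 : 0 ≤ ∫ h in ((r:ℝ) * Δx)..δ, ω h :=
      intervalIntegral.integral_nonneg (gridR_mul_le hδ hΔx) fun u _ => hω.nonneg u
    have hsplit : ∑ k ∈ Finset.Icc 1 r, qWeight ω δ Δx k
        = (∑ k ∈ Finset.Icc 1 r,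
            (1 / ((k : ℝ) * Δx)) * ∫ h in (((k : ℝ) - 1) * Δx)..((k : ℝ) * Δx), ω h)
          + (1 / ((r:ℝ) * Δx)) * ∫ h in ((r:ℝ) * Δx)..δ, ω h := by
      simp only [qWeight, hR]
      rw [Finset.sum_add_distrib]
      congr 1
      have : ∀ k ∈ Finset.Icc 1 r,
          (if k = r then (1:ℝ) else 0) / ((r:ℝ) * Δx) * (∫ h in ((r:ℝ) * Δx)..δ, ω h)
          = if k = r then (1 / ((r:ℝ) * Δx)) * ∫ h in ((r:ℝ) * Δx)..δ, ω h else 0 := by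
        intro k _
        split <;> simp
      rw [Finset.sum_congr rfl this, Finset.sum_ite_eq']
      simp only [Finset.mem_Icc]
      rw [if_pos ⟨hr, le_rfl⟩]
    have hfirst : ∑ k ∈ Finset.Icc 1 r,
          (1 / ((k : ℝ) * Δx)) * ∫ h in (((k : ℝ) - 1) * Δx)..((k : ℝ) * Δx), ω h
        ≤ (1 / Δx) * ∫ h in (0:ℝ)..((r:ℝ) * Δx), ω h := by
      have hterm : ∀ k ∈ Finset.Icc 1 r,
          (1 / ((k : ℝ) * Δx)) * (∫ h in (((k : ℝ) - 1) * Δx)..((k : ℝ) * Δx), ω h)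
          ≤ (1 / Δx) * ∫ h in (((k : ℝ) - 1) * Δx)..((k : ℝ) * Δx), ω h := by
        intro k hk
        have hk1 : 1 ≤ k := (Finset.mem_Icc.mp hk).1
        have hkr : (1:ℝ) ≤ (k:ℝ) := by exact_mod_cast hk1
        apply mul_le_mul_of_nonneg_right
        · apply one_div_le_one_div_of_le hΔx
          nlinarith
        · apply intervalIntegral.integral_nonneg (by nlinarith) fun u _ => hω.nonneg u
      calc ∑ k ∈ Finset.Icc 1 r,
            (1 / ((k : ℝ) * Δx)) * ∫ h in (((k : ℝ) - 1) * Δx)..((k : ℝ) * Δx), ω h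
          ≤ ∑ k ∈ Finset.Icc 1 r,
            (1 / Δx) * ∫ h in (((k : ℝ) - 1) * Δx)..((k : ℝ) * Δx), ω h :=
            Finset.sum_le_sum hterm
        _ = (1 / Δx) * ∑ k ∈ Finset.Icc 1 r,
              ∫ h in (((k : ℝ) - 1) * Δx)..((k : ℝ) * Δx), ω h := by
            rw [Finset.mul_sum]
        _ = (1 / Δx) * ∫ h in (0:ℝ)..((r:ℝ) * Δx), ω h := by
            congr 1
            rw [hreindex]
            rw [← hadj r]
            apply Finset.sum_congr rfl
            intro i _
            congr 1 <;> push_cast <;> ring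
    have htail : (1 / ((r:ℝ) * Δx)) * (∫ h in ((r:ℝ) * Δx)..δ, ω h)
        ≤ (1 / Δx) * ∫ h in ((r:ℝ) * Δx)..δ, ω h := by
      apply mul_le_mul_of_nonneg_right _ htail0
      apply one_div_le_one_div_of_le hΔx
      have hrr : (1:ℝ) ≤ (r:ℝ) := by exact_mod_cast hr
      nlinarith
    have hfull : (∫ h in (0:ℝ)..((r:ℝ) * Δx), ω h) + ∫ h in ((r:ℝ) * Δx)..δ, ω h = 1 := by
      rw [intervalIntegral.integral_add_adjacent_intervals (hInt _ _) (hInt _ _),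
        hω.normalized]
    rw [hR, hsplit]
    calc _ ≤ ((1 / Δx) * ∫ h in (0:ℝ)..((r:ℝ) * Δx), ω h)
          + (1 / Δx) * ∫ h in ((r:ℝ) * Δx)..δ, ω h := add_le_add hfirst htail
      _ = (1 / Δx) * ((∫ h in (0:ℝ)..((r:ℝ) * Δx), ω h) + ∫ h in ((r:ℝ) * Δx)..δ, ω h) := by
          ring
      _ = 1 / Δx := by rw [hfull, mul_one]

end Weights


private lemma sum_shiftZ' (f : ℤ → ℝ) (c : ℤ) (p q : ℕ) :
    ∑ i ∈ Finset.range (p + q), f (c + i) =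
      (∑ i ∈ Finset.range p, f (c + i)) + ∑ i ∈ Finset.range q, f (c + p + i) := by
  induction q with
  | zero => simp
  | succ q ih =>
    have h1 : p + (q + 1) = (p + q) + 1 := by omega
    rw [h1, Finset.sum_range_succ, ih, Finset.sum_range_succ, add_assoc]
    congr 2
    push_cast
    ring

private lemma telescope_absZ (v : ℤ → ℝ) (c : ℤ) (q : ℕ) :
    |v (c + q) - v c| ≤ ∑ i ∈ Finset.range q, |v (c + i + 1) - v (c + i)| := by
  induction q with
  | zero => simp
  | succ q ih =>
    rw [Finset.sum_range_succ]
    have h1 : v (c + (q + 1 : ℕ)) - v c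
        = (v (c + q + 1) - v (c + q)) + (v (c + q) - v c) := by
      have h2 : c + ((q : ℤ) + 1) = c + q + 1 := by ring
      push_cast
      rw [h2]; ring
    calc |v (c + (q + 1 : ℕ)) - v c|
        ≤ |v (c + q + 1) - v (c + q)| + |v (c + q) - v c| := by rw [h1]; exact abs_add_le _ _
      _ ≤ |v (c + q + 1) - v (c + q)| + ∑ i ∈ Finset.range q, |v (c + i + 1) - v (c + i)| := by
          linarith
      _ = _ := by ring

private lemma sum_abs_le_toReal (u₀ : ℝ → ℝ) (hBV : BoundedVariationOn u₀ Set.univ)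
    (n : ℕ) (y : ℕ → ℝ) (hy : Monotone y) :
    ∑ i ∈ Finset.range n, |u₀ (y (i+1)) - u₀ (y i)| ≤ (eVariationOn u₀ Set.univ).toReal := by
  have h := eVariationOn.sum_le (f := u₀) (n := n) hy (fun i => Set.mem_univ (y i))
  have h2 := ENNReal.toReal_mono hBV h
  rw [ENNReal.toReal_sum (fun i _ => (lt_of_le_of_lt
    (eVariationOn.edist_le u₀ (Set.mem_univ _) (Set.mem_univ _))
    (lt_top_iff_ne_top.2 hBV)).ne)] at h2
  refine le_of_eq_of_le (Finset.sum_congr rfl fun i _ => ?_).symm h2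
  rw [edist_dist, ENNReal.toReal_ofReal dist_nonneg, Real.dist_eq]

private lemma gridTV_seq (v : ℤ → ℝ)
    (Vr : ℝ)
    (hP : ∀ (a : ℤ) (n : ℕ), ∑ i ∈ Finset.range n, |v (a + i + 1) - v (a + i)| ≤ Vr)
    (J : ℕ → ℤ) (hJ : Monotone J) (N : ℕ) :
    ∑ i ∈ Finset.range N, |v (J (i+1)) - v (J i)| ≤ Vr := by
  have key : ∀ N : ℕ, ∑ i ∈ Finset.range N, |v (J (i+1)) - v (J i)|
      ≤ ∑ l ∈ Finset.range ((J N - J 0).toNat), |v (J 0 + l + 1) - v (J 0 + l)| := by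
    intro N
    induction N with
    | zero => simp
    | succ N ih =>
      rw [Finset.sum_range_succ]
      have hle : J N ≤ J (N+1) := hJ (Nat.le_succ N)
      have hle0 : J 0 ≤ J N := hJ (Nat.zero_le N)
      have hpq : (J (N+1) - J 0).toNat = (J N - J 0).toNat + (J (N+1) - J N).toNat := by
        omega
      have hJN : J 0 + ((J N - J 0).toNat : ℤ) = J N := by omega
      have htel : |v (J (N+1)) - v (J N)|
          ≤ ∑ l ∈ Finset.range ((J (N+1) - J N).toNat), |v (J N + l + 1) - v (J N + l)| := by
        have h := telescope_absZ v (J N) ((J (N+1) - J N).toNat)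
        rwa [show J N + (((J (N+1) - J N).toNat : ℕ) : ℤ) = J (N+1) from by omega] at h
      calc (∑ i ∈ Finset.range N, |v (J (i+1)) - v (J i)|) + |v (J (N+1)) - v (J N)|
          ≤ (∑ l ∈ Finset.range ((J N - J 0).toNat), |v (J 0 + l + 1) - v (J 0 + l)|)
            + ∑ l ∈ Finset.range ((J (N+1) - J N).toNat), |v (J N + l + 1) - v (J N + l)| :=
            add_le_add ih htel
        _ = ∑ l ∈ Finset.range ((J (N+1) - J 0).toNat), |v (J 0 + l + 1) - v (J 0 + l)| := by
            have h := sum_shiftZ' (fun j => |v (j + 1) - v j|) (J 0)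
              ((J N - J 0).toNat) ((J (N+1) - J N).toNat)
            rw [hJN] at h
            rw [hpq]
            exact h.symm
  exact (key N).trans (hP (J 0) _)

section CellAvg

variable {Δx m M : ℝ} {u₀ : ℝ → ℝ}

private lemma cellAvg_mem (hΔx : 0 < Δx) (hu₀i : Integrable u₀)
    (hu₀b : ∀ x, u₀ x ∈ Set.Icc m M) (j : ℤ) : cellAvg u₀ Δx j ∈ Set.Icc m M := by
  have hle : ((j:ℝ) - 1/2) * Δx ≤ ((j:ℝ) + 1/2) * Δx := by nlinarith
  have hlen : ((j:ℝ) + 1/2) * Δx - ((j:ℝ) - 1/2) * Δx = Δx := by ring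
  constructor
  · have h1 := intervalIntegral.integral_mono_on (μ := volume) hle
      (intervalIntegrable_const (c := m)) hu₀i.intervalIntegrable
      (fun x _ => (hu₀b x).1)
    rw [intervalIntegral.integral_const, smul_eq_mul, hlen] at h1
    have h2 : 1 / Δx * (Δx * m) ≤ cellAvg u₀ Δx j :=
      mul_le_mul_of_nonneg_left h1 (by positivity)
    have h3 : 1 / Δx * (Δx * m) = m := by field_simp
    linarith
  · have h1 := intervalIntegral.integral_mono_on (μ := volume) hle
      hu₀i.intervalIntegrable (intervalIntegrable_const (c := M))
      (fun x _ => (hu₀b x).2)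
    rw [intervalIntegral.integral_const, smul_eq_mul, hlen] at h1
    have h2 : cellAvg u₀ Δx j ≤ 1 / Δx * (Δx * M) :=
      mul_le_mul_of_nonneg_left h1 (by positivity)
    have h3 : 1 / Δx * (Δx * M) = M := by field_simp
    linarith

private lemma cellAvg_TV (hΔx : 0 < Δx) (hu₀i : Integrable u₀)
    (hBV : BoundedVariationOn u₀ Set.univ) (a : ℤ) (n : ℕ) :
    ∑ i ∈ Finset.range n, |cellAvg u₀ Δx (a + i + 1) - cellAvg u₀ Δx (a + i)|
      ≤ (eVariationOn u₀ Set.univ).toReal := by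
  have hint : ∀ c : ℝ, IntervalIntegrable (fun s => u₀ (s + c)) volume 0 Δx :=
    fun c => (hu₀i.comp_add_right c).intervalIntegrable
  have hdiff : ∀ j : ℤ, cellAvg u₀ Δx (j + 1) - cellAvg u₀ Δx j
      = (1 / Δx) * ∫ s in (0:ℝ)..Δx,
          (u₀ (s + ((j:ℝ) + 1/2) * Δx) - u₀ (s + ((j:ℝ) - 1/2) * Δx)) := by
    intro j
    have c1 : cellAvg u₀ Δx (j + 1)
        = (1 / Δx) * ∫ s in (0:ℝ)..Δx, u₀ (s + ((j:ℝ) + 1/2) * Δx) := by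
      simp only [cellAvg]
      congr 1
      rw [intervalIntegral.integral_comp_add_right]
      congr 1 <;> push_cast <;> ring
    have c2 : cellAvg u₀ Δx j
        = (1 / Δx) * ∫ s in (0:ℝ)..Δx, u₀ (s + ((j:ℝ) - 1/2) * Δx) := by
      simp only [cellAvg]
      congr 1
      rw [intervalIntegral.integral_comp_add_right]
      congr 1 <;> push_cast <;> ring
    rw [c1, c2, ← mul_sub, ← intervalIntegral.integral_sub (hint _) (hint _)]
  have habs : ∀ j : ℤ, |cellAvg u₀ Δx (j + 1) - cellAvg u₀ Δx j|
      ≤ (1 / Δx) * ∫ s in (0:ℝ)..Δx,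
          |u₀ (s + ((j:ℝ) + 1/2) * Δx) - u₀ (s + ((j:ℝ) - 1/2) * Δx)| := by
    intro j
    rw [hdiff j, abs_mul, abs_of_nonneg (by positivity : (0:ℝ) ≤ 1 / Δx)]
    exact mul_le_mul_of_nonneg_left
      (intervalIntegral.abs_integral_le_integral_abs hΔx.le) (by positivity)
  have habsint : ∀ j : ℤ, IntervalIntegrable
      (fun s => |u₀ (s + ((j:ℝ) + 1/2) * Δx) - u₀ (s + ((j:ℝ) - 1/2) * Δx)|) volume 0 Δx :=
    fun j => (((hu₀i.comp_add_right _).sub (hu₀i.comp_add_right _)).abs).intervalIntegrable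
  set Vr := (eVariationOn u₀ Set.univ).toReal with hVr
  have hpoint : ∀ s : ℝ, ∑ i ∈ Finset.range n,
      |u₀ (s + (((a + i : ℤ):ℝ) + 1/2) * Δx) - u₀ (s + (((a + i : ℤ):ℝ) - 1/2) * Δx)|
      ≤ Vr := by
    intro s
    have hy : Monotone (fun l : ℕ => s + (((a:ℝ) + l) - 1/2) * Δx) := by
      intro p q hpq
      simp only
      have : (p:ℝ) ≤ q := Nat.cast_le.2 hpq
      nlinarith
    have := sum_abs_le_toReal u₀ hBV n (fun l : ℕ => s + (((a:ℝ) + l) - 1/2) * Δx) hy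
    refine le_of_eq_of_le (Finset.sum_congr rfl fun i _ => ?_) this
    rw [show s + (((a + i : ℤ):ℝ) + 1/2) * Δx
          = s + (((a:ℝ) + ((i+1 : ℕ):ℝ)) - 1/2) * Δx from by push_cast; ring,
      show s + (((a + i : ℤ):ℝ) - 1/2) * Δx
          = s + (((a:ℝ) + (i:ℝ)) - 1/2) * Δx from by push_cast; ring]
  calc ∑ i ∈ Finset.range n, |cellAvg u₀ Δx (a + i + 1) - cellAvg u₀ Δx (a + i)|
      ≤ ∑ i ∈ Finset.range n, (1 / Δx) * ∫ s in (0:ℝ)..Δx,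
          |u₀ (s + (((a + i : ℤ):ℝ) + 1/2) * Δx) - u₀ (s + (((a + i : ℤ):ℝ) - 1/2) * Δx)| :=
        Finset.sum_le_sum fun i _ => habs (a + i)
    _ = (1 / Δx) * ∫ s in (0:ℝ)..Δx, ∑ i ∈ Finset.range n,
          |u₀ (s + (((a + i : ℤ):ℝ) + 1/2) * Δx) - u₀ (s + (((a + i : ℤ):ℝ) - 1/2) * Δx)| := by
        rw [← Finset.mul_sum]
        congr 1
        exact (intervalIntegral.integral_finset_sum (s := Finset.range n)
          (f := fun (i : ℕ) (s : ℝ) => |u₀ (s + (((a + i : ℤ):ℝ) + 1/2) * Δx)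
            - u₀ (s + (((a + i : ℤ):ℝ) - 1/2) * Δx)|)
          (fun i _ => habsint (a + i))).symm
    _ ≤ (1 / Δx) * ∫ _s in (0:ℝ)..Δx, Vr := by
        apply mul_le_mul_of_nonneg_left _ (by positivity : (0:ℝ) ≤ 1 / Δx)
        apply intervalIntegral.integral_mono_on hΔx.le
          ((MeasureTheory.integrable_finset_sum _ (fun i _ =>
            ((hu₀i.comp_add_right _).sub (hu₀i.comp_add_right _)).abs)).intervalIntegrable)
          intervalIntegrable_const
        intro s _
        exact hpoint s
    _ = Vr := by
        rw [intervalIntegral.integral_const, smul_eq_mul, sub_zero]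
        field_simp

end CellAvg

end AuxBV

/-- total variation bound on the piecewise constant numerical solution. -/
theorem numerical_BV_bound
    (T δ Δx Δt C K₁ K₂ m M : ℝ) (hT : 0 < T) (hδ : 0 < δ) (hΔx : 0 < Δx) (hΔt : 0 < Δt)
    (ω : ℝ → ℝ) (hω : AdmissibleKernel δ ω)
    (f : ℝ → ℝ) (g : ℝ → ℝ → ℝ) (C : ℝ)
    (hcons : ∀ x, g x x = f x)
    (hLip : ∀ a b c d, |g a b - g c d| ≤ C * (|a - c| + |b - d|))
    (hmono1 : ∀ a a' b, a ≤ a' → g a b ≤ g a' b)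
    (hmono2 : ∀ a b b', b ≤ b' → g a b' ≤ g a b)
    (u₀ : ℝ → ℝ) (hu₀i : Integrable u₀) (hu₀b : ∀ x, u₀ x ∈ Set.Icc m M)
    (hu₀BV : BoundedVariationOn u₀ Set.univ)
    (hK₁ : ∀ a a' b, a ∈ Set.Icc m M → a' ∈ Set.Icc m M → b ∈ Set.Icc m M →
      |g a b - g a' b| ≤ K₁ * |a - a'|)
    (hK₂ : ∀ a b b', a ∈ Set.Icc m M → b ∈ Set.Icc m M → b' ∈ Set.Icc m M →
      |g a b - g a b'| ≤ K₂ * |b - b'|)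
    (hCFL : Δt / Δx * (K₁ + K₂) ≤ 1) :
    ∀ t ∈ Set.Icc (0:ℝ) T,
      eVariationOn (fun x => numInterp g ω δ Δx Δt u₀ x t) Set.univ
        ≤ eVariationOn u₀ Set.univ := by
  intro t ht
  have hmM : m ≤ M := (hu₀b 0).1.trans (hu₀b 0).2
  rcases eq_or_lt_of_le hmM with heq | hlt
  · -- degenerate case `m = M` : all data constant
    have hu0 : ∀ x, u₀ x = m := fun x => le_antisymm (heq ▸ (hu₀b x).2) (hu₀b x).1
    have hu0' : u₀ = fun _ => m := funext hu0
    have hca : ∀ j, cellAvg u₀ Δx j = m := by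
      intro j
      simp only [cellAvg, hu0']
      rw [intervalIntegral.integral_const, smul_eq_mul,
        show ((j:ℝ) + 1/2) * Δx - ((j:ℝ) - 1/2) * Δx = Δx from by ring]
      field_simp
    have hsol : ∀ n j, numSol g ω δ Δx Δt u₀ n j = m := by
      intro n
      induction n with
      | zero => exact hca
      | succ n ih =>
        intro j
        show schemeStep g Δt (qWeight ω δ Δx) (gridR1 δ Δx) (numSol g ω δ Δx Δt u₀ n) j = m
        simp [schemeStep, ih]
    have hfun : (fun x => numInterp g ω δ Δx Δt u₀ x t) = u₀ :=
      funext fun x => (hsol _ _).trans (hu0 x).symm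
    rw [hfun]
  · -- main case `m < M`
    have hK10 : 0 ≤ K₁ := by
      have h := hK₁ M m m ⟨hmM, le_rfl⟩ ⟨le_rfl, hmM⟩ ⟨le_rfl, hmM⟩
      rw [abs_of_nonneg (show (0:ℝ) ≤ M - m by linarith)] at h
      have h2 := (abs_nonneg (g M m - g m m)).trans h
      exact (mul_nonneg_iff_of_pos_right (by linarith : (0:ℝ) < M - m)).mp h2
    have hK20 : 0 ≤ K₂ := by
      have h := hK₂ m M m ⟨le_rfl, hmM⟩ ⟨hmM, le_rfl⟩ ⟨le_rfl, hmM⟩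
      rw [abs_of_nonneg (show (0:ℝ) ≤ M - m by linarith)] at h
      have h2 := (abs_nonneg (g m M - g m m)).trans h
      exact (mul_nonneg_iff_of_pos_right (by linarith : (0:ℝ) < M - m)).mp h2
    have hWnn : ∀ k ∈ Finset.Icc 1 (gridR1 δ Δx), 0 ≤ qWeight ω δ Δx k :=
      fun k _ => qWeight_nonneg hδ hΔx hω k
    have hWsum := qWeight_sum_le hδ hΔx hω
    have hCFL' : Δt * (∑ k ∈ Finset.Icc 1 (gridR1 δ Δx), qWeight ω δ Δx k) * (K₁ + K₂)
        ≤ 1 := by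
      have h1 : Δt * (∑ k ∈ Finset.Icc 1 (gridR1 δ Δx), qWeight ω δ Δx k) * (K₁ + K₂)
          ≤ Δt * (1 / Δx) * (K₁ + K₂) := by
        apply mul_le_mul_of_nonneg_right _ (by linarith)
        exact mul_le_mul_of_nonneg_left hWsum hΔt.le
      have h2 : Δt * (1 / Δx) * (K₁ + K₂) = Δt / Δx * (K₁ + K₂) := by ring
      linarith
    have hfin : eVariationOn u₀ Set.univ ≠ ⊤ := hu₀BV
    set Vr := (eVariationOn u₀ Set.univ).toReal with hVrdef
    have inv : ∀ n : ℕ, (∀ j, numSol g ω δ Δx Δt u₀ n j ∈ Set.Icc m M)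
        ∧ ∀ (a : ℤ) (n' : ℕ), ∑ i ∈ Finset.range n',
            |numSol g ω δ Δx Δt u₀ n (a + i + 1) - numSol g ω δ Δx Δt u₀ n (a + i)|
          ≤ Vr := by
      intro n
      induction n with
      | zero =>
        exact ⟨fun j => cellAvg_mem hΔx hu₀i hu₀b j,
          fun a n' => cellAvg_TV hΔx hu₀i hu₀BV a n'⟩
      | succ n ih =>
        have hstep : numSol g ω δ Δx Δt u₀ (n + 1)
            = schemeStep g Δt (qWeight ω δ Δx) (gridR1 δ Δx)
                (numSol g ω δ Δx Δt u₀ n) := rfl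
        constructor
        · intro j
          rw [hstep]
          exact max_principle hΔt.le hmM hmono1 hmono2 hK₁ hK₂ hWnn hCFL'
            (numSol g ω δ Δx Δt u₀ n) ih.1 j
        · intro a n'
          rw [hstep]
          calc ∑ i ∈ Finset.range n',
              |schemeStep g Δt (qWeight ω δ Δx) (gridR1 δ Δx)
                  (numSol g ω δ Δx Δt u₀ n) (a + i + 1)
                - schemeStep g Δt (qWeight ω δ Δx) (gridR1 δ Δx)
                    (numSol g ω δ Δx Δt u₀ n) (a + i)|
              ≤ ∑ i ∈ Finset.range (n' + 2 * gridR1 δ Δx),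
                  |numSol g ω δ Δx Δt u₀ n (a - gridR1 δ Δx + i + 1)
                    - numSol g ω δ Δx Δt u₀ n (a - gridR1 δ Δx + i)| :=
              tvd_step hΔt.le hmono1 hmono2 hK₁ hK₂ hK10 hK20 hWnn hCFL'
                (numSol g ω δ Δx Δt u₀ n) ih.1 a n'
            _ ≤ Vr := ih.2 (a - gridR1 δ Δx) (n' + 2 * gridR1 δ Δx)
    obtain ⟨hbnd, hP⟩ := inv ⌊t / Δt⌋₊
    have hfun : (fun x => numInterp g ω δ Δx Δt u₀ x t)
        = fun x => numSol g ω δ Δx Δt u₀ ⌊t / Δt⌋₊ ⌊x / Δx + 1/2⌋ := rfl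
    rw [hfun]
    unfold eVariationOn
    refine iSup_le ?_
    rintro ⟨N, y, hy, -⟩
    have hJ : Monotone (fun i : ℕ => ⌊y i / Δx + 1/2⌋) := by
      intro p q hpq
      apply Int.floor_mono
      have h1 : y p ≤ y q := hy hpq
      gcongr
    have hconv : ∑ i ∈ Finset.range N,
        edist ((fun x => numSol g ω δ Δx Δt u₀ ⌊t / Δt⌋₊ ⌊x / Δx + 1/2⌋) (y (i + 1)))
          ((fun x => numSol g ω δ Δx Δt u₀ ⌊t / Δt⌋₊ ⌊x / Δx + 1/2⌋) (y i))
        = ENNReal.ofReal (∑ i ∈ Finset.range N,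
            |numSol g ω δ Δx Δt u₀ ⌊t / Δt⌋₊ ⌊y (i + 1) / Δx + 1/2⌋
              - numSol g ω δ Δx Δt u₀ ⌊t / Δt⌋₊ ⌊y i / Δx + 1/2⌋|) := by
      rw [ENNReal.ofReal_sum_of_nonneg (fun i _ => abs_nonneg _)]
      exact Finset.sum_congr rfl fun i _ => by rw [edist_dist, Real.dist_eq]
    refine le_of_eq_of_le hconv ?_
    refine le_trans (ENNReal.ofReal_le_ofReal ?_) (le_of_eq (ENNReal.ofReal_toReal hfin))
    exact gridTV_seq (numSol g ω δ Δx Δt u₀ ⌊t / Δt⌋₊) Vr hP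
      (fun i => ⌊y i / Δx + 1/2⌋) hJ N
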